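/- Let α ∈ ℝ and y₀ > 0 satisfy 1 + 2αy₀ > 0 and 1 + αy₀ > 0. Define Y : ℝ → ℝ by Y(x) = y₀·( αy₀ + √( (αy₀ + 1)² + (1 + 2αy₀)·x² ) ) / (1 + 2αy₀). Then Y is well-defined (the radicand is strictly positive), Y(0) = y₀, and for every x ∈ ℝ the differential identity Y'(x)·( 1 + x² + α·Y(x) ) = x·Y(x) holds; that is, Y solves the ODE dy/dx = x·y/(1 + x² + α·y) with y(0) = y₀. -/

import Mathlib

open Real

/-- The explicit solution `Y` of `dy/dx = xy/(1 + x² + αy)`, `y(0) = y₀`, used to bound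
the slow variable in the delayed-stability lemma for the aircraft model. -/
noncomputable def aircraftY (α y₀ x : ℝ) : ℝ :=
  y₀ * (α * y₀ + Real.sqrt ((α * y₀ + 1) ^ 2 + (1 + 2 * α * y₀) * x ^ 2)) / (1 + 2 * α * y₀)

/-- `Y` is well-defined (positive radicand), satisfies `Y(0) = y₀`, and solves
`Y'(x)·(1 + x² + α·Y(x)) = x·Y(x)` for every `x`. -/
theorem stmt11 (α y₀ : ℝ) (hy₀ : 0 < y₀)
    (h1 : 0 < 1 + 2 * α * y₀) (h2 : 0 < 1 + α * y₀) :
    (∀ x : ℝ, 0 < (α * y₀ + 1) ^ 2 + (1 + 2 * α * y₀) * x ^ 2) ∧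
    aircraftY α y₀ 0 = y₀ ∧
    (∀ x : ℝ, ∃ d : ℝ,
      HasDerivAt (aircraftY α y₀) d x ∧
      d * (1 + x ^ 2 + α * aircraftY α y₀ x) = x * aircraftY α y₀ x) := by
  have hb : 0 < α * y₀ + 1 := by linarith
  have hR : ∀ x : ℝ, 0 < (α * y₀ + 1) ^ 2 + (1 + 2 * α * y₀) * x ^ 2 := by
    intro x
    have : 0 ≤ (1 + 2 * α * y₀) * x ^ 2 := by positivity
    nlinarith
  refine ⟨hR, ?_, ?_⟩
  · simp only [aircraftY]
    rw [show (α * y₀ + 1) ^ 2 + (1 + 2 * α * y₀) * (0:ℝ) ^ 2 = (α * y₀ + 1) ^ 2 by ring,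
      Real.sqrt_sq hb.le]
    rw [div_eq_iff h1.ne']
    ring
  · intro x
    set R : ℝ := (α * y₀ + 1) ^ 2 + (1 + 2 * α * y₀) * x ^ 2 with hRdef
    have hRpos := hR x
    have hs : 0 < Real.sqrt R := Real.sqrt_pos.mpr hRpos
    have hs2 : Real.sqrt R * Real.sqrt R = R := Real.mul_self_sqrt hRpos.le
    have hf : HasDerivAt (fun t : ℝ => (α * y₀ + 1) ^ 2 + (1 + 2 * α * y₀) * t ^ 2)
        ((1 + 2 * α * y₀) * (2 * x)) x := by
      have := ((hasDerivAt_pow 2 x).const_mul (1 + 2 * α * y₀)).const_add ((α * y₀ + 1) ^ 2)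
      simpa using this
    have hsq : HasDerivAt
        (fun t : ℝ => Real.sqrt ((α * y₀ + 1) ^ 2 + (1 + 2 * α * y₀) * t ^ 2))
        ((1 + 2 * α * y₀) * (2 * x) / (2 * Real.sqrt R)) x := hf.sqrt hRpos.ne'
    have hY : HasDerivAt (aircraftY α y₀)
        (y₀ * ((1 + 2 * α * y₀) * (2 * x) / (2 * Real.sqrt R)) / (1 + 2 * α * y₀)) x := by
      have := ((hsq.const_add (α * y₀)).const_mul y₀).div_const (1 + 2 * α * y₀)
      exact this
    refine ⟨_, hY, ?_⟩
    simp only [aircraftY, ← hRdef]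
    have hc : (1 + y₀ * 2 * α) ≠ 0 := ne_of_gt (by linarith)
    field_simp
    linear_combination (-x) * hs2 + (-x) * hRdef
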